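/- Let 0 < S₀ ≤ S₁ and define S_opt : [0,1] → ℝ by S_opt(x) = S₀ for 0 ≤ x ≤ 1/2, S_opt(x) = S₀/(2(1−x)) for 1/2 < x < 1 − S₀/(2S₁), and S_opt(x) = S₁ for 1 − S₀/(2S₁) ≤ x ≤ 1. Then ∫₀¹ S_opt(x) dx = S₀·(1 + (1/2)·log(S₁/S₀)) and ∫₀¹ (1−x)·S_opt(x)² dx = (S₀²/2)·(1 + (1/2)·log(S₁/S₀)); consequently (1/2)(∫₀¹ S_opt(x)dx)² / ∫₀¹ (1−x)S_opt(x)² dx = 1 + (1/2)·log(S₁/S₀). -/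

import Mathlib

open MeasureTheory intervalIntegral

theorem integrals_of_optimal_profile (S₀ S₁ : ℝ) (hS₀ : 0 < S₀) (hS₀S₁ : S₀ ≤ S₁)
    (S : ℝ → ℝ)
    (h1 : ∀ x : ℝ, 0 ≤ x → x ≤ 1/2 → S x = S₀)
    (h2 : ∀ x : ℝ, 1/2 < x → x < 1 - S₀ / (2 * S₁) → S x = S₀ / (2 * (1 - x)))
    (h3 : ∀ x : ℝ, 1 - S₀ / (2 * S₁) ≤ x → x ≤ 1 → S x = S₁) :
    (∫ x in (0:ℝ)..1, S x) = S₀ * (1 + (1/2) * Real.log (S₁ / S₀)) ∧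
    (∫ x in (0:ℝ)..1, (1 - x) * (S x)^2) = (S₀^2 / 2) * (1 + (1/2) * Real.log (S₁ / S₀)) ∧
    (1/2) * (∫ x in (0:ℝ)..1, S x)^2 / (∫ x in (0:ℝ)..1, (1 - x) * (S x)^2)
      = 1 + (1/2) * Real.log (S₁ / S₀) := by
  have hS₁ : 0 < S₁ := lt_of_lt_of_le hS₀ hS₀S₁
  set c : ℝ := 1 - S₀ / (2 * S₁) with hc
  have hd0 : 0 < S₀ / (2 * S₁) := by positivity
  have hd2 : S₀ / (2 * S₁) ≤ 1/2 := by
    rw [div_le_div_iff₀ (by positivity) (by norm_num)]; nlinarith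
  have hc1 : c < 1 := by simp only [hc]; linarith
  have hc2 : (1:ℝ)/2 ≤ c := by simp only [hc]; linarith
  have h1c : 1 - c = S₀ / (2 * S₁) := by simp [hc]
  -- EqOn facts
  have hEqA : Set.EqOn S (fun _ => S₀) (Set.uIcc 0 (1/2 : ℝ)) := by
    rw [Set.uIcc_of_le (by norm_num)]
    intro x hx; exact h1 x hx.1 hx.2
  have hEqB : Set.EqOn S (fun x => S₀ / (2 * (1 - x))) (Set.uIcc (1/2 : ℝ) c) := by
    rw [Set.uIcc_of_le hc2]
    intro x hx
    rcases eq_or_lt_of_le hx.1 with h | h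
    · rw [h1 x (by linarith [h.symm]) (le_of_eq h.symm)]
      simp only; rw [← h]; norm_num
    · rcases eq_or_lt_of_le hx.2 with h' | h'
      · rw [h', h3 c le_rfl (le_of_lt hc1)]
        simp only [h1c]
        field_simp
      · exact h2 x h h'
  have hEqC : Set.EqOn S (fun _ => S₁) (Set.uIcc c 1) := by
    rw [Set.uIcc_of_le (le_of_lt hc1)]
    intro x hx; exact h3 x hx.1 hx.2
  -- log identity
  have hlogid : Real.log (1/2) - Real.log (S₀ / (2 * S₁)) = Real.log (S₁ / S₀) := by
    rw [← Real.log_div (by norm_num) (ne_of_gt hd0)]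
    congr 1
    field_simp
  -- positivity of 1 - x on middle interval
  have hmidpos : ∀ x ∈ Set.Icc (1/2 : ℝ) c, 0 < 1 - x := fun x hx => by
    have := hx.2; linarith
  -- continuity of middle integrand
  have hcontB : ContinuousOn (fun x => S₀ / (2 * (1 - x))) (Set.uIcc (1/2 : ℝ) c) := by
    rw [Set.uIcc_of_le hc2]
    apply ContinuousOn.div continuousOn_const
    · exact (continuousOn_const.mul ((continuousOn_const.sub continuousOn_id)))
    · intro x hx
      have := hmidpos x hx
      positivity
  have hcontB2 : ContinuousOn (fun x => S₀^2 / (4 * (1 - x))) (Set.uIcc (1/2 : ℝ) c) := by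
    rw [Set.uIcc_of_le hc2]
    apply ContinuousOn.div continuousOn_const
    · exact (continuousOn_const.mul ((continuousOn_const.sub continuousOn_id)))
    · intro x hx
      have := hmidpos x hx
      positivity
  -- piece integrals for S
  have IA : (∫ x in (0:ℝ)..(1/2), S x) = S₀ / 2 := by
    rw [intervalIntegral.integral_congr hEqA]
    simp
    ring
  have IB : (∫ x in (1/2 : ℝ)..c, S x) = (S₀/2) * Real.log (S₁ / S₀) := by
    rw [intervalIntegral.integral_congr hEqB]
    have hsub : (∫ x in (1/2 : ℝ)..c, S₀ / (2 * (1 - x)))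
        = (-(S₀/2) * Real.log (1 - c)) - (-(S₀/2) * Real.log (1 - 1/2)) := by
      apply intervalIntegral.integral_eq_sub_of_hasDerivAt
        (f := fun y => -(S₀/2) * Real.log (1 - y))
      · intro x hx
        rw [Set.uIcc_of_le hc2] at hx
        have hx1 : 0 < 1 - x := hmidpos x hx
        have hlog : HasDerivAt (fun y => Real.log (1 - y)) ((1 - x)⁻¹ * (-1)) x := by
          have h1d : HasDerivAt (fun y : ℝ => 1 - y) (-1) x := by
            simpa using (hasDerivAt_id x).const_sub 1
          exact (Real.hasDerivAt_log (ne_of_gt hx1)).comp x h1d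
        have := hlog.const_mul (-(S₀/2))
        exact this.congr_deriv (by field_simp)
      · exact hcontB.intervalIntegrable
    rw [hsub, h1c]
    have : Real.log (1 - 1/2 : ℝ) = Real.log (1/2 : ℝ) := by norm_num
    rw [this]
    linear_combination (S₀/2) * hlogid
  have IC : (∫ x in c..(1:ℝ), S x) = S₀ / 2 := by
    rw [intervalIntegral.integral_congr hEqC]
    simp
    rw [h1c]
    field_simp
  -- integrability of S on pieces
  have intA : IntervalIntegrable S volume 0 (1/2) := by
    rw [intervalIntegrable_iff]
    apply (_root_.intervalIntegrable_const (c := S₀) (a := (0:ℝ)) (b := 1/2)).def'.congr_fun ?_ measurableSet_uIoc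
    exact fun x hx => (hEqA (Set.uIoc_subset_uIcc hx)).symm
  have intB : IntervalIntegrable S volume (1/2) c := by
    rw [intervalIntegrable_iff]
    apply (hcontB.intervalIntegrable).def'.congr_fun ?_ measurableSet_uIoc
    exact fun x hx => (hEqB (Set.uIoc_subset_uIcc hx)).symm
  have intC : IntervalIntegrable S volume c 1 := by
    rw [intervalIntegrable_iff]
    apply (_root_.intervalIntegrable_const (c := S₁) (a := c) (b := 1)).def'.congr_fun ?_ measurableSet_uIoc
    exact fun x hx => (hEqC (Set.uIoc_subset_uIcc hx)).symm
  have hsplit : (∫ x in (0:ℝ)..1, S x) = S₀ * (1 + (1/2) * Real.log (S₁ / S₀)) := by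
    rw [← intervalIntegral.integral_add_adjacent_intervals (intA.trans intB) intC,
        ← intervalIntegral.integral_add_adjacent_intervals intA intB, IA, IB, IC]
    ring
  -- second integrand
  have hEqA2 : Set.EqOn (fun x => (1 - x) * (S x)^2) (fun x => (1 - x) * S₀^2) (Set.uIcc 0 (1/2 : ℝ)) := by
    intro x hx; simp only; rw [hEqA hx]
  have hEqB2 : Set.EqOn (fun x => (1 - x) * (S x)^2) (fun x => S₀^2 / (4 * (1 - x))) (Set.uIcc (1/2 : ℝ) c) := by
    intro x hx
    have hx1 : 0 < 1 - x := by
      rw [Set.uIcc_of_le hc2] at hx; exact hmidpos x hx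
    simp only; rw [hEqB hx]
    field_simp
    ring
  have hEqC2 : Set.EqOn (fun x => (1 - x) * (S x)^2) (fun x => (1 - x) * S₁^2) (Set.uIcc c 1) := by
    intro x hx; simp only; rw [hEqC hx]
  have hcontA2 : ContinuousOn (fun x : ℝ => (1 - x) * S₀^2) (Set.uIcc 0 (1/2 : ℝ)) :=
    ((continuousOn_const.sub continuousOn_id).mul continuousOn_const)
  have hcontC2 : ContinuousOn (fun x : ℝ => (1 - x) * S₁^2) (Set.uIcc c 1) :=
    ((continuousOn_const.sub continuousOn_id).mul continuousOn_const)
  -- piece integrals for second integrand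
  have JA : (∫ x in (0:ℝ)..(1/2), (1 - x) * (S x)^2) = 3 * S₀^2 / 8 := by
    rw [intervalIntegral.integral_congr hEqA2]
    have : (∫ x in (0:ℝ)..(1/2), (1 - x) * S₀^2)
        = (S₀^2 * (1/2 - (1/2)^2/2)) - (S₀^2 * (0 - 0^2/2)) := by
      apply intervalIntegral.integral_eq_sub_of_hasDerivAt
        (f := fun y => S₀^2 * (y - y^2/2))
      · intro x hx
        have : HasDerivAt (fun y : ℝ => S₀^2 * (y - y^2/2)) (S₀^2 * (1 - x)) x := by
          have h0 : HasDerivAt (fun y : ℝ => y - y^2/2) (1 - x) x := by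
            have := ((hasDerivAt_id x).sub (((hasDerivAt_pow 2 x)).div_const 2))
            simp at this; exact this
          simpa using h0.const_mul (S₀^2)
        exact this.congr_deriv (by ring)
      · exact hcontA2.intervalIntegrable
    rw [this]; ring
  have JB : (∫ x in (1/2 : ℝ)..c, (1 - x) * (S x)^2) = (S₀^2/4) * Real.log (S₁ / S₀) := by
    rw [intervalIntegral.integral_congr hEqB2]
    have hsub : (∫ x in (1/2 : ℝ)..c, S₀^2 / (4 * (1 - x)))
        = (-(S₀^2/4) * Real.log (1 - c)) - (-(S₀^2/4) * Real.log (1 - 1/2)) := by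
      apply intervalIntegral.integral_eq_sub_of_hasDerivAt
        (f := fun y => -(S₀^2/4) * Real.log (1 - y))
      · intro x hx
        rw [Set.uIcc_of_le hc2] at hx
        have hx1 : 0 < 1 - x := hmidpos x hx
        have hlog : HasDerivAt (fun y => Real.log (1 - y)) ((1 - x)⁻¹ * (-1)) x := by
          have h1d : HasDerivAt (fun y : ℝ => 1 - y) (-1) x := by
            simpa using (hasDerivAt_id x).const_sub 1
          exact (Real.hasDerivAt_log (ne_of_gt hx1)).comp x h1d
        have := hlog.const_mul (-(S₀^2/4))
        exact this.congr_deriv (by field_simp)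
      · exact hcontB2.intervalIntegrable
    rw [hsub, h1c]
    have : Real.log (1 - 1/2 : ℝ) = Real.log (1/2 : ℝ) := by norm_num
    rw [this]
    linear_combination (S₀^2/4) * hlogid
  have JC : (∫ x in c..(1:ℝ), (1 - x) * (S x)^2) = S₀^2 / 8 := by
    rw [intervalIntegral.integral_congr hEqC2]
    have : (∫ x in c..(1:ℝ), (1 - x) * S₁^2)
        = (S₁^2 * (1 - 1^2/2)) - (S₁^2 * (c - c^2/2)) := by
      apply intervalIntegral.integral_eq_sub_of_hasDerivAt
        (f := fun y => S₁^2 * (y - y^2/2))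
      · intro x hx
        have : HasDerivAt (fun y : ℝ => S₁^2 * (y - y^2/2)) (S₁^2 * (1 - x)) x := by
          have h0 : HasDerivAt (fun y : ℝ => y - y^2/2) (1 - x) x := by
            have := ((hasDerivAt_id x).sub (((hasDerivAt_pow 2 x)).div_const 2))
            simp at this; exact this
          simpa using h0.const_mul (S₁^2)
        exact this.congr_deriv (by ring)
      · exact hcontC2.intervalIntegrable
    rw [this]
    have hcsq : S₁^2 * (1 - 1^2/2) - S₁^2 * (c - c^2/2) = S₁^2 * (1 - c)^2 / 2 := by ring
    rw [hcsq, h1c]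
    field_simp
    ring
  -- integrability on pieces for second integrand
  have intA2 : IntervalIntegrable (fun x => (1 - x) * (S x)^2) volume 0 (1/2) := by
    rw [intervalIntegrable_iff]
    apply (hcontA2.intervalIntegrable).def'.congr_fun ?_ measurableSet_uIoc
    exact fun x hx => (hEqA2 (Set.uIoc_subset_uIcc hx)).symm
  have intB2 : IntervalIntegrable (fun x => (1 - x) * (S x)^2) volume (1/2) c := by
    rw [intervalIntegrable_iff]
    apply (hcontB2.intervalIntegrable).def'.congr_fun ?_ measurableSet_uIoc
    exact fun x hx => (hEqB2 (Set.uIoc_subset_uIcc hx)).symm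
  have intC2 : IntervalIntegrable (fun x => (1 - x) * (S x)^2) volume c 1 := by
    rw [intervalIntegrable_iff]
    apply (hcontC2.intervalIntegrable).def'.congr_fun ?_ measurableSet_uIoc
    exact fun x hx => (hEqC2 (Set.uIoc_subset_uIcc hx)).symm
  have hsplit2 : (∫ x in (0:ℝ)..1, (1 - x) * (S x)^2) = (S₀^2 / 2) * (1 + (1/2) * Real.log (S₁ / S₀)) := by
    rw [← intervalIntegral.integral_add_adjacent_intervals (intA2.trans intB2) intC2,
        ← intervalIntegral.integral_add_adjacent_intervals intA2 intB2, JA, JB, JC]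
    ring
  refine ⟨hsplit, hsplit2, ?_⟩
  rw [hsplit, hsplit2]
  have hL : 0 ≤ Real.log (S₁ / S₀) := Real.log_nonneg (by rw [le_div_iff₀ hS₀]; linarith)
  have hpos : 0 < 1 + (1/2) * Real.log (S₁ / S₀) := by linarith
  field_simp
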